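/- Let n ≥ 1 and let T : ℝⁿ → ℝⁿ be monotone, additively homogeneous, and convex. Then there exist real numbers α ≤ β such that the additive slice space A_α^β(T) = {x ∈ ℝⁿ : α·e + x ≤ T(x) ≤ β·e + x} is unbounded in Hilbert's seminorm if and only if there exist disjoint nonempty sets Θ, Δ ⊆ {1,…,n} such that supp(T_i) ⊆ Θ for all i ∈ Θ, and Δ is a MAX-dominion for T. -/

import Mathlib

/-- `T` is additively homogeneous: `T(x + c·e) = T(x) + c·e`. -/
def AddHomog (n : ℕ) (T : (Fin n → ℝ) → (Fin n → ℝ)) : Prop :=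
  ∀ (x : Fin n → ℝ) (c : ℝ), T (fun i => x i + c) = fun i => T x i + c

/-- The support of `g : ℝⁿ → ℝ`: indices `i` on which `g` effectively depends. -/
def Supp (n : ℕ) (g : (Fin n → ℝ) → ℝ) : Set (Fin n) :=
  {i | ∃ x y : Fin n → ℝ, (∀ j, j ≠ i → x j = y j) ∧ g x ≠ g y}

/-- `Δ` is a MAX-dominion for `T`. -/
def MaxDominion (n : ℕ) (T : (Fin n → ℝ) → (Fin n → ℝ)) (Δ : Set (Fin n)) : Prop :=
  Δ.Nonempty ∧ ∃ α : ℝ, ∀ i ∈ Δ, ∀ t : ℝ, 0 ≤ t →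
    α ≤ T (Δᶜ.indicator fun _ => -t) i

/-- Hilbert's seminorm. -/
noncomputable def hilbertSeminorm (n : ℕ) (x : Fin n → ℝ) : ℝ :=
  (⨆ i, x i) - ⨅ i, x i

/-- The additive slice space `A_α^β(T)`. -/
def addSliceSpace (n : ℕ) (T : (Fin n → ℝ) → (Fin n → ℝ)) (α β : ℝ) : Set (Fin n → ℝ) :=
  {x | ∀ i, α + x i ≤ T x i ∧ T x i ≤ β + x i}


open Filter Topology

section Helpers
variable {n : ℕ}

lemma step_le {T : (Fin n → ℝ) → (Fin n → ℝ)} (hmono : Monotone T) (hhom : AddHomog n T)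
    {x y : Fin n → ℝ} {c : ℝ} (h : ∀ j, x j ≤ y j + c) (i : Fin n) :
    T x i ≤ T y i + c := by
  have h1 : T x ≤ T (fun j => y j + c) := hmono h
  rw [hhom y c] at h1
  exact h1 i

lemma supp_congr_aux {g : (Fin n → ℝ) → ℝ} (s : Finset (Fin n)) :
    ∀ (x y : Fin n → ℝ), (∀ j, j ∉ s → x j = y j) → (∀ j ∈ s, j ∉ Supp n g) → g x = g y := by
  classical
  induction s using Finset.induction_on with
  | empty =>
    intro x y h _
    congr 1
    funext j
    exact h j (Finset.notMem_empty j)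
  | @insert a s ha ih =>
    intro x y h hnot
    have h1 : g x = g (Function.update x a (y a)) := by
      by_contra hne
      exact hnot a (Finset.mem_insert_self a s)
        ⟨x, Function.update x a (y a), fun j hj => (Function.update_of_ne hj _ _).symm, hne⟩
    rw [h1]
    apply ih
    · intro j hj
      by_cases hja : j = a
      · subst hja; simp
      · rw [Function.update_of_ne hja]
        exact h j (by simp [hja, hj])
    · intro j hj
      exact hnot j (Finset.mem_insert_of_mem hj)

lemma supp_congr {g : (Fin n → ℝ) → ℝ} {S : Set (Fin n)} (hS : Supp n g ⊆ S)
    (x y : Fin n → ℝ) (h : ∀ j ∈ S, x j = y j) : g x = g y := by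
  classical
  apply supp_congr_aux (Finset.univ.filter (fun j => j ∉ S)) x y
  · intro j hj
    simp only [Finset.mem_filter, Finset.mem_univ, true_and, not_not] at hj
    exact h j hj
  · intro j hj hsupp
    simp only [Finset.mem_filter, Finset.mem_univ, true_and] at hj
    exact hj (hS hsupp)

lemma exists_max_hs (hn : 0 < n) (x : Fin n → ℝ) :
    ∃ i, (∀ j, x j ≤ x i) ∧ (⨆ j, x j) = x i := by
  haveI : Nonempty (Fin n) := ⟨⟨0, hn⟩⟩
  obtain ⟨i, hi⟩ := Finite.exists_max x
  exact ⟨i, hi, le_antisymm (ciSup_le hi) (le_ciSup (Set.finite_range x).bddAbove i)⟩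

lemma exists_min_hs (hn : 0 < n) (x : Fin n → ℝ) :
    ∃ i, (∀ j, x i ≤ x j) ∧ (⨅ j, x j) = x i := by
  haveI : Nonempty (Fin n) := ⟨⟨0, hn⟩⟩
  obtain ⟨i, hi⟩ := Finite.exists_min x
  exact ⟨i, hi, le_antisymm (ciInf_le (Set.finite_range x).bddBelow i) (le_ciInf hi)⟩

lemma hs_ge (hn : 0 < n) (x : Fin n → ℝ) (i j : Fin n) :
    x i - x j ≤ hilbertSeminorm n x := by
  haveI : Nonempty (Fin n) := ⟨⟨0, hn⟩⟩
  have h1 : x i ≤ ⨆ k, x k := le_ciSup (Set.finite_range x).bddAbove i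
  have h2 : (⨅ k, x k) ≤ x j := ciInf_le (Set.finite_range x).bddBelow j
  unfold hilbertSeminorm
  linarith

lemma hs_shift (hn : 0 < n) (x : Fin n → ℝ) (c : ℝ) :
    hilbertSeminorm n (fun i => x i + c) = hilbertSeminorm n x := by
  haveI : Nonempty (Fin n) := ⟨⟨0, hn⟩⟩
  obtain ⟨i, hi, hieq⟩ := exists_max_hs hn x
  obtain ⟨j, hj, hjeq⟩ := exists_min_hs hn x
  have h1 : (⨆ k, x k + c) = x i + c :=
    le_antisymm (ciSup_le fun k => by linarith [hi k])
      (le_ciSup (Set.finite_range fun k => x k + c).bddAbove i)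
  have h2 : (⨅ k, x k + c) = x j + c :=
    le_antisymm (ciInf_le (Set.finite_range fun k => x k + c).bddBelow j)
      (le_ciInf fun k => by linarith [hj k])
  unfold hilbertSeminorm
  rw [h1, h2, hieq, hjeq]
  ring

lemma mem_shift {T : (Fin n → ℝ) → (Fin n → ℝ)} (hhom : AddHomog n T) {α β : ℝ}
    {x : Fin n → ℝ} (c : ℝ) (hx : x ∈ addSliceSpace n T α β) :
    (fun i => x i + c) ∈ addSliceSpace n T α β := by
  intro i
  rw [hhom x c]
  obtain ⟨h1, h2⟩ := hx i
  constructor <;> simp <;> linarith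

lemma lipschitz_bound {T : (Fin n → ℝ) → (Fin n → ℝ)} (hmono : Monotone T) (hhom : AddHomog n T)
    (x x' : Fin n → ℝ) (i : Fin n) :
    T x i ≤ T x' i + ∑ j, |x j - x' j| := by
  refine step_le hmono hhom (fun j => ?_) i
  have h1 : x j - x' j ≤ |x j - x' j| := le_abs_self _
  have h2 : |x j - x' j| ≤ ∑ l, |x l - x' l| :=
    Finset.single_le_sum (f := fun l => |x l - x' l|) (fun l _ => abs_nonneg _) (Finset.mem_univ j)
  linarith

end Helpers

section H2
variable {n : ℕ}

lemma update_key {T : (Fin n → ℝ) → (Fin n → ℝ)} (hmono : Monotone T) (hhom : AddHomog n T)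
    (hn : 0 < n) (i j : Fin n) (hconv : ConvexOn ℝ Set.univ (fun x => T x i))
    (hray : ∀ c : ℝ, 0 ≤ c → T (fun l => if l = j then c else 0) i ≤ T (fun _ => 0) i)
    (x : Fin n → ℝ) (c : ℝ) (hc : 0 ≤ c) :
    T (Function.update x j (x j + c)) i = T x i := by
  haveI : Nonempty (Fin n) := ⟨⟨0, hn⟩⟩
  refine le_antisymm ?_ ?_
  · -- convexity argument
    rcases eq_or_lt_of_le hc with hc0 | hc0
    · rw [← hc0]
      simp
    by_contra hlt
    push_neg at hlt
    set g0 := T x i with hg0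
    set gc := T (Function.update x j (x j + c)) i with hgc
    set B := Finset.univ.sup' (Finset.univ_nonempty) x with hB
    have hxB : ∀ l, x l ≤ B := fun l => Finset.le_sup' x (Finset.mem_univ l)
    set Bd := T (fun _ => 0) i + B with hBd
    have hbd : ∀ d : ℝ, 0 ≤ d → T (Function.update x j (x j + d)) i ≤ Bd := by
      intro d hd
      have h1 : T (Function.update x j (x j + d)) i ≤ T (fun l => if l = j then d else 0) i + B := by
        refine step_le hmono hhom (fun l => ?_) i
        by_cases hl : l = j
        · subst hl
          rw [Function.update_self, if_pos rfl]
          linarith [hxB l]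
        · rw [Function.update_of_ne hl, if_neg hl]
          linarith [hxB l]
      have h2 := hray d hd
      linarith
    have hgcB : gc ≤ Bd := hbd c hc
    set δ := gc - g0 with hδ
    have hδpos : 0 < δ := by simp [hδ]; linarith
    set t := c * (Bd + 1 - g0) / δ with ht
    have hBdg : g0 + δ ≤ Bd := by linarith
    have htc : c < t := by
      rw [ht, mul_div_assoc]
      nth_rewrite 1 [← mul_one c]
      apply mul_lt_mul_of_pos_left _ hc0
      rw [lt_div_iff₀ hδpos]
      linarith
    have ht0 : 0 < t := lt_trans hc0 htc
    set lam := c / t with hlam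
    have hlam0 : 0 < lam := div_pos hc0 ht0
    have hlam1 : lam < 1 := (div_lt_one ht0).2 htc
    have hδt : δ * t = c * (Bd + 1 - g0) := by
      rw [ht]
      field_simp
    have hcomb : Function.update x j (x j + c)
        = lam • (Function.update x j (x j + t)) + (1 - lam) • x := by
      funext l
      by_cases hl : l = j
      · subst hl
        simp only [Function.update_self, Pi.add_apply, Pi.smul_apply, smul_eq_mul]
        rw [hlam]
        field_simp
        ring
      · simp only [Function.update_of_ne hl, Pi.add_apply, Pi.smul_apply, smul_eq_mul]
        ring
    have hcx := hconv.2 (Set.mem_univ (Function.update x j (x j + t))) (Set.mem_univ x)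
      (le_of_lt hlam0) (by linarith : (0:ℝ) ≤ 1 - lam) (by ring)
    simp only [smul_eq_mul] at hcx
    rw [← hcomb] at hcx
    -- hcx : gc ≤ lam * T(update t) i + (1-lam) * g0
    have hut : T (Function.update x j (x j + t)) i ≤ Bd := hbd t (le_of_lt ht0)
    have hmul := mul_le_mul_of_nonneg_left hcx (le_of_lt ht0)
    have hlamt : t * lam = c := by
      rw [hlam]
      field_simp
    nlinarith [hmul, hut, hδt, ht0, hc0]
  · -- monotonicity
    have : x ≤ Function.update x j (x j + c) := by
      intro l
      by_cases hl : l = j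
      · subst hl; simp only [Function.update_self]; linarith
      · rw [Function.update_of_ne hl]
    exact hmono this i

lemma not_mem_supp {T : (Fin n → ℝ) → (Fin n → ℝ)} (hmono : Monotone T) (hhom : AddHomog n T)
    (hn : 0 < n) (i j : Fin n) (hconv : ConvexOn ℝ Set.univ (fun x => T x i))
    (hray : ∀ c : ℝ, 0 ≤ c → T (fun l => if l = j then c else 0) i ≤ T (fun _ => 0) i) :
    j ∉ Supp n (fun x => T x i) := by
  intro hj
  obtain ⟨x, y, hagree, hne⟩ := hj
  apply hne
  rcases le_total (x j) (y j) with h | h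
  · have h0 : (0:ℝ) ≤ y j - x j := by linarith
    have hk := update_key hmono hhom hn i j hconv hray x (y j - x j) h0
    have hy : y = Function.update x j (x j + (y j - x j)) := by
      funext l
      by_cases hl : l = j
      · subst hl; simp
      · rw [Function.update_of_ne hl]
        exact (hagree l hl).symm
    show T x i = T y i
    rw [hy, hk]
  · have h0 : (0:ℝ) ≤ x j - y j := by linarith
    have hk := update_key hmono hhom hn i j hconv hray y (x j - y j) h0
    have hx : x = Function.update y j (y j + (x j - y j)) := by
      funext l
      by_cases hl : l = j
      · subst hl; simp
      · rw [Function.update_of_ne hl]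
        exact hagree l hl
    show T x i = T y i
    rw [hx, hk]

end H2

section H3
variable {n : ℕ}

lemma backward_dir (hn : 0 < n) (T : (Fin n → ℝ) → (Fin n → ℝ))
    (hmono : Monotone T) (hhom : AddHomog n T)
    (Θ Δ : Set (Fin n)) (hΘne : Θ.Nonempty) (hΔne : Δ.Nonempty) (hdis : Disjoint Θ Δ)
    (hsupp : ∀ i ∈ Θ, Supp n (fun x => T x i) ⊆ Θ) (hdom : MaxDominion n T Δ) :
    ∃ α β : ℝ, α ≤ β ∧
      ¬ ∃ M : ℝ, ∀ x ∈ addSliceSpace n T α β, hilbertSeminorm n x ≤ M := by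
  haveI : Nonempty (Fin n) := ⟨⟨0, hn⟩⟩
  obtain ⟨-, α₀, hα₀⟩ := hdom
  set z0 : Fin n → ℝ := fun _ => 0 with hz0
  set β := Finset.univ.sup' Finset.univ_nonempty (fun i => T z0 i) with hβ
  set tmin := Finset.univ.inf' Finset.univ_nonempty (fun i => T z0 i) with htmin
  have hβle : ∀ i, T z0 i ≤ β := fun i => Finset.le_sup' (fun i => T z0 i) (Finset.mem_univ i)
  have htminle : ∀ i, tmin ≤ T z0 i := fun i => Finset.inf'_le (fun i => T z0 i) (Finset.mem_univ i)
  set α := min (min α₀ tmin) β with hα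
  refine ⟨α, β, min_le_right _ _, ?_⟩
  rintro ⟨M, hM⟩
  set t := |M| + 1 with htdef
  have ht0 : 0 ≤ t := by positivity
  have htM : M < t := by
    have := le_abs_self M
    linarith
  -- the floor vector
  set xt : Fin n → ℝ := Δᶜ.indicator (fun _ => -t) with hxt
  have hxt_le0 : ∀ i, xt i ≤ 0 := by
    intro i
    rw [hxt]
    by_cases hi : i ∈ Δᶜ
    · rw [Set.indicator_of_mem hi]; linarith
    · rw [Set.indicator_of_notMem hi]
  have hxt_ge : ∀ i, -t ≤ xt i := by
    intro i
    rw [hxt]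
    by_cases hi : i ∈ Δᶜ
    · rw [Set.indicator_of_mem hi]
    · rw [Set.indicator_of_notMem hi]; linarith
  have hxtΔ : ∀ i ∈ Δ, xt i = 0 := by
    intro i hi
    rw [hxt, Set.indicator_of_notMem (by simpa using hi)]
  have hxtΔc : ∀ i ∉ Δ, xt i = -t := by
    intro i hi
    rw [hxt, Set.indicator_of_mem (by simpa using hi)]
  -- the set S of sub-eigenvectors above xt
  set S : Set (Fin n → ℝ) := {z | (∀ i, T z i ≤ β + z i) ∧ ∀ i, xt i ≤ z i} with hS
  have h0S : z0 ∈ S := by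
    constructor
    · intro i
      have := hβle i
      simp only [hz0]
      linarith
    · intro i; exact hxt_le0 i
  -- pointwise infimum
  set w : Fin n → ℝ := fun i => sInf ((fun z => z i) '' S) with hw
  have hbdd : ∀ i : Fin n, BddBelow ((fun z => z i) '' S) := by
    intro i
    refine ⟨xt i, ?_⟩
    rintro r ⟨z, hz, rfl⟩
    exact hz.2 i
  have hne : ∀ i : Fin n, ((fun z => z i) '' S).Nonempty := fun i => ⟨z0 i, z0, h0S, rfl⟩
  have hwle : ∀ z ∈ S, ∀ i, w i ≤ z i := by
    intro z hz i
    exact csInf_le (hbdd i) ⟨z, hz, rfl⟩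
  have hxtw : ∀ i, xt i ≤ w i := by
    intro i
    apply le_csInf (hne i)
    rintro r ⟨z, hz, rfl⟩
    exact hz.2 i
  have hw0 : ∀ i, w i ≤ 0 := fun i => hwle z0 h0S i
  have hwsub : ∀ i, T w i ≤ β + w i := by
    intro i
    have h1 : T w i - β ≤ w i := by
      rw [hw]
      apply le_csInf (hne i)
      rintro r ⟨z, hz, rfl⟩
      have h2 : T w i ≤ T z i := hmono (fun l => hwle z hz l) i
      have h3 := hz.1 i
      linarith
    linarith
  have hwS : w ∈ S := ⟨hwsub, hxtw⟩
  -- minimality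
  have hmin : ∀ i, xt i < w i → β + w i ≤ T w i := by
    intro i hi
    by_contra hcon
    push_neg at hcon
    set ε := min (w i - xt i) (β + w i - T w i) with hε
    have hεpos : 0 < ε := lt_min (by linarith) (by linarith)
    set z := Function.update w i (w i - ε) with hzdef
    have hzS : z ∈ S := by
      have hzlew : ∀ l, z l ≤ w l := by
        intro l
        by_cases hl : l = i
        · subst hl; rw [hzdef, Function.update_self]; linarith
        · rw [hzdef, Function.update_of_ne hl]
      constructor
      · intro l
        have h2 : T z l ≤ T w l := hmono hzlew l
        by_cases hl : l = i
        · subst hl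
          rw [hzdef, Function.update_self]
          have : ε ≤ β + w l - T w l := min_le_right _ _
          linarith
        · rw [hzdef, Function.update_of_ne hl]
          linarith [hwsub l]
      · intro l
        by_cases hl : l = i
        · subst hl
          rw [hzdef, Function.update_self]
          have : ε ≤ w l - xt l := min_le_left _ _
          linarith
        · rw [hzdef, Function.update_of_ne hl]
          exact hxtw l
    have := hwle z hzS i
    rw [hzdef, Function.update_self] at this
    linarith
  -- w is in the slice space
  have hwA : w ∈ addSliceSpace n T α β := by
    intro i
    refine ⟨?_, hwsub i⟩
    rcases eq_or_lt_of_le (hxtw i) with heq | hlt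
    · -- w i = xt i
      by_cases hiΔ : i ∈ Δ
      · have h1 : T xt i ≤ T w i := hmono (fun l => hxtw l) i
        have h2 := hα₀ i hiΔ t ht0
        have h3 := hxtΔ i hiΔ
        have hαle : α ≤ α₀ := le_trans (min_le_left _ _) (min_le_left _ _)
        rw [← hxt] at h2
        rw [← heq, h3]
        linarith
      · have h3 := hxtΔc i hiΔ
        have h1 : T (fun l => z0 l + (-t)) i ≤ T w i := by
          apply hmono (fun l => ?_) i
          have := hxt_ge l
          have := hxtw l
          simp only [hz0]
          linarith
        rw [hhom z0 (-t)] at h1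
        have h1' : T z0 i + (-t) ≤ T w i := h1
        have hαle : α ≤ tmin := le_trans (min_le_left _ _) (min_le_right _ _)
        have := htminle i
        rw [← heq, h3]
        linarith
    · have := hmin i hlt
      have hαβ : α ≤ β := min_le_right _ _
      linarith
  -- Hilbert seminorm of w is at least t
  obtain ⟨iΔ, hiΔ⟩ := hΔne
  obtain ⟨jΘ, hjΘ⟩ := hΘne
  have hwiΔ : w iΔ = 0 := le_antisymm (hw0 iΔ) (by rw [← hxtΔ iΔ hiΔ]; exact hxtw iΔ)
  have hjΘΔ : jΘ ∉ Δ := fun h => (Set.disjoint_left.mp hdis hjΘ) h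
  -- the test vector zstar
  set zstar : Fin n → ℝ := Θ.indicator (fun _ => -t) with hzstar
  have hzstar_le0 : ∀ i, zstar i ≤ 0 := by
    intro i
    rw [hzstar]
    by_cases hi : i ∈ Θ
    · rw [Set.indicator_of_mem hi]; linarith
    · rw [Set.indicator_of_notMem hi]
  have hzstarS : zstar ∈ S := by
    constructor
    · intro i
      by_cases hi : i ∈ Θ
      · have hagree : ∀ l ∈ Θ, zstar l = (fun _ => -t : Fin n → ℝ) l := by
          intro l hl
          rw [hzstar, Set.indicator_of_mem hl]
        have heq : T zstar i = T (fun _ => -t) i :=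
          supp_congr (hsupp i hi) zstar (fun _ => -t) hagree
        have hconst : (fun _ : Fin n => -t) = fun l => z0 l + (-t) := by
          funext l; simp [hz0]
        rw [heq, hconst, hhom z0 (-t)]
        have h1 := hβle i
        have h2 : zstar i = -t := by rw [hzstar, Set.indicator_of_mem hi]
        rw [h2]
        simp only
        linarith
      · have h1 : T zstar i ≤ T z0 i := hmono (fun l => hzstar_le0 l) i
        have h2 : zstar i = 0 := by rw [hzstar, Set.indicator_of_notMem hi]
        rw [h2]
        linarith [hβle i]
    · intro l
      by_cases hl : l ∈ Θ
      · have h1 : zstar l = -t := by rw [hzstar, Set.indicator_of_mem hl]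
        have h2 : xt l = -t := hxtΔc l (fun h => (Set.disjoint_left.mp hdis hl) h)
        rw [h1, h2]
      · have h1 : zstar l = 0 := by rw [hzstar, Set.indicator_of_notMem hl]
        rw [h1]
        exact hxt_le0 l
  have hwjΘ : w jΘ = -t := by
    apply le_antisymm
    · have := hwle zstar hzstarS jΘ
      rw [hzstar, Set.indicator_of_mem hjΘ] at this
      exact this
    · rw [← hxtΔc jΘ hjΘΔ]
      exact hxtw jΘ
  have hhs : t ≤ hilbertSeminorm n w := by
    have := hs_ge hn w iΔ jΘ
    rw [hwiΔ, hwjΘ] at this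
    linarith
  have := hM w hwA
  linarith

end H3

section H4
variable {n : ℕ}

lemma forward_dir (hn : 0 < n) (T : (Fin n → ℝ) → (Fin n → ℝ))
    (hmono : Monotone T) (hhom : AddHomog n T)
    (hconv : ∀ i, ConvexOn ℝ Set.univ (fun x => T x i))
    (α β : ℝ)
    (hunb : ¬ ∃ M : ℝ, ∀ x ∈ addSliceSpace n T α β, hilbertSeminorm n x ≤ M) :
    ∃ Θ Δ : Set (Fin n), Θ.Nonempty ∧ Δ.Nonempty ∧ Disjoint Θ Δ ∧
      (∀ i ∈ Θ, Supp n (fun x => T x i) ⊆ Θ) ∧ MaxDominion n T Δ := by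
  haveI : Nonempty (Fin n) := ⟨⟨0, hn⟩⟩
  push_neg at hunb
  choose X hXA hXhs using hunb
  -- normalized sequence
  set U : ℕ → Fin n → ℝ := fun k i => X (k:ℝ) i + (-(⨆ j, X (k:ℝ) j)) with hU
  have hUA : ∀ k, U k ∈ addSliceSpace n T α β := fun k => mem_shift hhom _ (hXA _)
  have hUhs : ∀ k : ℕ, (k:ℝ) < hilbertSeminorm n (U k) := by
    intro k
    rw [hU]
    rw [hs_shift hn (X (k:ℝ)) (-(⨆ j, X (k:ℝ) j))]
    exact hXhs _
  have hU0 : ∀ k i, U k i ≤ 0 := by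
    intro k i
    obtain ⟨im, him, heq⟩ := exists_max_hs hn (X (k:ℝ))
    have h1 := him i
    simp only [hU]
    rw [heq]
    linarith
  have hUmax : ∀ k, ∃ i, U k i = 0 := by
    intro k
    obtain ⟨im, him, heq⟩ := exists_max_hs hn (X (k:ℝ))
    exact ⟨im, by simp only [hU]; rw [heq]; ring⟩
  set m : ℕ → ℝ := fun k => hilbertSeminorm n (U k) with hmdef
  have hm : ∀ k : ℕ, (k:ℝ) < m k := hUhs
  have hm0 : ∀ k, 0 < m k := fun k => lt_of_le_of_lt (Nat.cast_nonneg k) (hm k)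
  have hsupU : ∀ k, (⨆ i, U k i) = 0 := by
    intro k
    obtain ⟨i', hi', heq'⟩ := exists_max_hs hn (U k)
    obtain ⟨im, him⟩ := hUmax k
    rw [heq']
    exact le_antisymm (hU0 k i') (him ▸ hi' im)
  have key1 : ∀ k, (∃ i, U k i = -(m k)) ∧ ∀ i, -(m k) ≤ U k i := by
    intro k
    obtain ⟨i'', hi'', heq''⟩ := exists_min_hs hn (U k)
    have hmval : m k = -(U k i'') := by
      simp only [hmdef, hilbertSeminorm]
      rw [hsupU k, heq'']
      ring
    constructor
    · exact ⟨i'', by rw [hmval]; ring⟩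
    · intro i
      rw [hmval]
      simpa using hi'' i
  -- pigeonhole for the argmax
  have hfreq0 : ∃ i₀, ∃ᶠ k in atTop, U k i₀ = 0 := by
    by_contra h
    push_neg at h
    have h2 : ∀ᶠ k in atTop, ∀ i, U k i ≠ 0 := by
      rw [eventually_all]
      intro i
      have := h i
      exact this
    obtain ⟨k, hk⟩ := h2.exists
    obtain ⟨i, hi⟩ := hUmax k
    exact hk i hi
  obtain ⟨i₀, hfreq0⟩ := hfreq0
  obtain ⟨φ₀, hφ₀mono, hφ₀⟩ := Filter.extraction_of_frequently_atTop hfreq0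
  -- first compactness extraction: directions
  set y0 : ℕ → Fin n → ℝ := fun k i => U (φ₀ k) i / m (φ₀ k) with hy0
  have hy0mem : ∀ k, y0 k ∈ Set.Icc (fun _ : Fin n => (-1:ℝ)) (fun _ => (0:ℝ)) := by
    intro k
    constructor
    · intro i
      simp only [hy0]
      rw [le_div_iff₀ (hm0 (φ₀ k))]
      have := (key1 (φ₀ k)).2 i
      linarith
    · intro i
      simp only [hy0]
      rw [div_le_iff₀ (hm0 (φ₀ k))]
      have := hU0 (φ₀ k) i
      linarith
  obtain ⟨Ylim, hYmem, φ₁, hφ₁mono, hφ₁tend⟩ := isCompact_Icc.tendsto_subseq hy0mem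
  -- second compactness extraction: exponentials
  set E0 : ℕ → Fin n → ℝ := fun k i => Real.exp (U (φ₀ (φ₁ k)) i) with hE0
  have hE0mem : ∀ k, E0 k ∈ Set.Icc (fun _ : Fin n => (0:ℝ)) (fun _ => (1:ℝ)) := by
    intro k
    constructor
    · intro i
      exact (Real.exp_pos _).le
    · intro i
      exact Real.exp_le_one_iff.mpr (hU0 _ _)
  obtain ⟨Elim, hEmem, φ₂, hφ₂mono, hφ₂tend⟩ := isCompact_Icc.tendsto_subseq hE0mem
  -- the final subsequence
  set ψ : ℕ → ℕ := fun k => φ₀ (φ₁ (φ₂ k)) with hψ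
  set W : ℕ → Fin n → ℝ := fun k => U (ψ k) with hW
  set Mk : ℕ → ℝ := fun k => m (ψ k) with hMkdef
  set z : ℕ → Fin n → ℝ := fun k i => W k i / Mk k with hz
  have hψmono : StrictMono ψ := hφ₀mono.comp (hφ₁mono.comp hφ₂mono)
  have hWA : ∀ k, W k ∈ addSliceSpace n T α β := fun k => hUA _
  have hW0 : ∀ k i, W k i ≤ 0 := fun k i => hU0 _ i
  have hWi₀ : ∀ k, W k i₀ = 0 := fun k => hφ₀ _
  have hMk : ∀ k : ℕ, (k:ℝ) < Mk k := by
    intro k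
    have h1 : (k:ℝ) ≤ (ψ k : ℝ) := Nat.cast_le.mpr hψmono.le_apply
    exact lt_of_le_of_lt h1 (hm (ψ k))
  have hMk0 : ∀ k, 0 < Mk k := fun k => hm0 _
  have hWge : ∀ k i, -(Mk k) ≤ W k i := fun k i => (key1 (ψ k)).2 i
  have hWmin : ∀ k, ∃ i, W k i = -(Mk k) := fun k => (key1 (ψ k)).1
  have htendMk : Tendsto Mk atTop atTop :=
    tendsto_atTop_mono (fun k => (hMk k).le) tendsto_natCast_atTop_atTop
  -- coordinatewise limits
  have hz_tend : ∀ i, Tendsto (fun k => z k i) atTop (𝓝 (Ylim i)) := by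
    intro i
    have h1 : Tendsto ((y0 ∘ φ₁) ∘ φ₂) atTop (𝓝 Ylim) := hφ₁tend.comp hφ₂mono.tendsto_atTop
    exact tendsto_pi_nhds.mp h1 i
  have hE_tend : ∀ i, Tendsto (fun k => Real.exp (W k i)) atTop (𝓝 (Elim i)) := by
    intro i
    exact tendsto_pi_nhds.mp hφ₂tend i
  have hYlb : ∀ i, -1 ≤ Ylim i := fun i => hYmem.1 i
  have hYub : ∀ i, Ylim i ≤ 0 := fun i => hYmem.2 i
  have hElb : ∀ i, 0 ≤ Elim i := fun i => hEmem.1 i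
  -- the two sets
  set Θ : Set (Fin n) := {i | Ylim i = -1} with hΘ
  set Δ : Set (Fin n) := {i | Elim i ≠ 0} with hΔ
  -- Θ nonempty
  have hΘne : Θ.Nonempty := by
    have hfreq1 : ∃ i₁, ∃ᶠ k in atTop, z k i₁ = -1 := by
      by_contra h
      push_neg at h
      have h2 : ∀ᶠ k in atTop, ∀ i, z k i ≠ -1 := by
        rw [eventually_all]
        intro i
        have := h i
        exact this
      obtain ⟨k, hk⟩ := h2.exists
      obtain ⟨i, hi⟩ := hWmin k
      apply hk i
      simp only [hz]
      rw [hi, neg_div, div_self (ne_of_gt (hMk0 k))]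
    obtain ⟨i₁, hfreq1⟩ := hfreq1
    exact ⟨i₁, tendsto_nhds_unique_of_frequently_eq (hz_tend i₁) tendsto_const_nhds hfreq1⟩
  -- Δ nonempty
  have hEi₀ : Elim i₀ = 1 := by
    apply tendsto_nhds_unique (hE_tend i₀)
    have : (fun k => Real.exp (W k i₀)) = fun _ => (1:ℝ) := by
      funext k
      rw [hWi₀ k, Real.exp_zero]
    rw [this]
    exact tendsto_const_nhds
  have hΔne : Δ.Nonempty := ⟨i₀, by simp only [hΔ, Set.mem_setOf_eq, hEi₀]; norm_num⟩
  -- disjointness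
  have hdis : Disjoint Θ Δ := by
    rw [Set.disjoint_left]
    intro i hiΘ hiΔ
    have hYi : Ylim i = -1 := hiΘ
    have hEneq : Elim i ≠ 0 := hiΔ
    have hEpos : 0 < Elim i := lt_of_le_of_ne (hElb i) (Ne.symm hEneq)
    set c := Real.log (Elim i / 2) with hc
    have ev1 : ∀ᶠ k in atTop, Elim i / 2 < Real.exp (W k i) :=
      (hE_tend i).eventually (eventually_gt_nhds (show Elim i / 2 < Elim i by linarith))
    have ev2 : ∀ᶠ k in atTop, z k i < -(1/2) :=
      (hz_tend i).eventually (eventually_lt_nhds (show Ylim i < -(1/2) by rw [hYi]; norm_num))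
    have ev4 : ∀ᶠ (k:ℕ) in atTop, (-2*c : ℝ) < (k:ℝ) :=
      tendsto_natCast_atTop_atTop.eventually_gt_atTop _
    obtain ⟨k, hk1, hk2, hk4⟩ := (ev1.and (ev2.and ev4)).exists
    have h5 : c < W k i := by
      have := Real.log_lt_log (by linarith : (0:ℝ) < Elim i / 2) hk1
      rwa [Real.log_exp] at this
    have h6 : W k i = z k i * Mk k := by
      simp only [hz]
      rw [div_mul_cancel₀ _ (ne_of_gt (hMk0 k))]
    have h7 : z k i * Mk k < -(1/2) * Mk k :=
      mul_lt_mul_of_pos_right hk2 (hMk0 k)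
    have h8 : -(1/2) * Mk k ≤ -(1/2) * (k:ℝ) := by
      have := (hMk k).le
      nlinarith
    rw [h6] at h5
    linarith
  -- MAX-dominion
  have hdom : MaxDominion n T Δ := by
    refine ⟨hΔne, α + Finset.univ.inf' Finset.univ_nonempty (fun i => Real.log (Elim i / 2)), ?_⟩
    intro i hiΔ t ht
    have hEpos : 0 < Elim i := lt_of_le_of_ne (hElb i) (Ne.symm hiΔ)
    have hciev : ∀ᶠ k in atTop, Real.log (Elim i / 2) < W k i := by
      have ev1 : ∀ᶠ k in atTop, Elim i / 2 < Real.exp (W k i) :=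
        (hE_tend i).eventually (eventually_gt_nhds (show Elim i / 2 < Elim i by linarith))
      refine ev1.mono (fun k hk => ?_)
      have := Real.log_lt_log (by linarith : (0:ℝ) < Elim i / 2) hk
      rwa [Real.log_exp] at this
    have hoff : ∀ᶠ k in atTop, ∀ j, Elim j = 0 → W k j ≤ -t := by
      rw [eventually_all]
      intro j
      by_cases hj : Elim j = 0
      · have hnhds : ∀ᶠ x in 𝓝 (Elim j), x < Real.exp (-t) :=
          eventually_lt_nhds (show Elim j < Real.exp (-t) by rw [hj]; exact Real.exp_pos _)
        have ev : ∀ᶠ k in atTop, Real.exp (W k j) < Real.exp (-t) := (hE_tend j).eventually hnhds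
        exact ev.mono (fun k hk _ => (Real.exp_lt_exp.mp hk).le)
      · exact Filter.Eventually.of_forall (fun k hj' => absurd hj' hj)
    obtain ⟨k, hk1, hk2⟩ := (hciev.and hoff).exists
    have hle : ∀ j, W k j ≤ (Δᶜ.indicator fun _ => -t) j := by
      intro j
      by_cases hj : j ∈ Δ
      · rw [Set.indicator_of_notMem (by simpa using hj)]
        exact hW0 k j
      · rw [Set.indicator_of_mem (by simpa using hj)]
        exact hk2 j (not_not.mp hj)
    have hmono1 : T (W k) i ≤ T (Δᶜ.indicator fun _ => -t) i := hmono hle i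
    have hA := (hWA k i).1
    have hinf : Finset.univ.inf' Finset.univ_nonempty (fun i => Real.log (Elim i / 2))
        ≤ Real.log (Elim i / 2) := Finset.inf'_le _ (Finset.mem_univ i)
    calc α + Finset.univ.inf' Finset.univ_nonempty (fun i => Real.log (Elim i / 2))
        ≤ α + W k i := by linarith
      _ ≤ T (W k) i := hA
      _ ≤ T (Δᶜ.indicator fun _ => -t) i := hmono1
  -- invariance of Θ
  have hsupp : ∀ i ∈ Θ, Supp n (fun x => T x i) ⊆ Θ := by
    intro i hiΘ j hjsupp
    have hYi : Ylim i = -1 := hiΘ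
    by_contra hjΘ
    have hYj : -1 < Ylim j := lt_of_le_of_ne (hYlb j) (Ne.symm hjΘ)
    -- the ray inequality
    have hrayA : ∀ s : ℝ, 0 ≤ s → T (fun l => s * Ylim l) i ≤ T (fun _ => 0) i - s := by
      intro s hs
      set T0i := T (fun _ : Fin n => (0:ℝ)) i with hT0i
      have hev : ∀ᶠ k in atTop, T (fun l => s * Ylim l) i ≤
          T0i + (s / Mk k) * (β - T0i) + s * z k i + ∑ l, |s * Ylim l - s * z k l| := by
        refine (htendMk.eventually_ge_atTop s).mono (fun k hk => ?_)
        set lam := s / Mk k with hlam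
        have hlam0 : 0 ≤ lam := div_nonneg hs (hMk0 k).le
        have hlam1 : lam ≤ 1 := (div_le_one (hMk0 k)).mpr hk
        have hpt : lam • W k + (1 - lam) • (fun _ : Fin n => (0:ℝ)) = fun l => s * z k l := by
          funext l
          simp only [Pi.add_apply, Pi.smul_apply, smul_eq_mul, hlam, hz, mul_zero, add_zero]
          rw [div_mul_eq_mul_div, mul_div_assoc]
        have hcx := (hconv i).2 (Set.mem_univ (W k)) (Set.mem_univ (fun _ : Fin n => (0:ℝ)))
          hlam0 (by linarith : (0:ℝ) ≤ 1 - lam) (by ring)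
        simp only [smul_eq_mul] at hcx
        rw [hpt] at hcx
        -- hcx : T (fun l => s * z k l) i ≤ lam * T (W k) i + (1 - lam) * T0i
        have hβW : T (W k) i ≤ β + W k i := (hWA k i).2
        have h2 : lam * T (W k) i ≤ lam * (β + W k i) :=
          mul_le_mul_of_nonneg_left hβW hlam0
        have h3 : lam * W k i = s * z k i := by
          simp only [hlam, hz]
          rw [div_mul_eq_mul_div, mul_div_assoc]
        have hlip := lipschitz_bound hmono hhom (fun l => s * Ylim l) (fun l => s * z k l) i
        have h4 : lam * (β + W k i) = lam * β + s * z k i := by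
          rw [mul_add, h3]
        nlinarith [hcx, h2, hlip, h4]
      have htend : Tendsto (fun k => T0i + (s / Mk k) * (β - T0i) + s * z k i
          + ∑ l, |s * Ylim l - s * z k l|) atTop (𝓝 (T0i - s)) := by
        have t1 : Tendsto (fun k => s / Mk k) atTop (𝓝 0) :=
          Tendsto.div_atTop tendsto_const_nhds htendMk
        have t2 : Tendsto (fun k => (s / Mk k) * (β - T0i)) atTop (𝓝 0) := by
          simpa using t1.mul_const (β - T0i)
        have t3 : Tendsto (fun k => s * z k i) atTop (𝓝 (-s)) := by
          have := (hz_tend i).const_mul s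
          rwa [hYi, mul_neg_one] at this
        have t4 : Tendsto (fun k => ∑ l, |s * Ylim l - s * z k l|) atTop (𝓝 0) := by
          have : Tendsto (fun k => ∑ l : Fin n, |s * Ylim l - s * z k l|) atTop
              (𝓝 (∑ l : Fin n, (0:ℝ))) := by
            apply tendsto_finset_sum
            intro l _
            have h5 : Tendsto (fun k => s * Ylim l - s * z k l) atTop (𝓝 0) := by
              have h6 : Tendsto (fun k => s * Ylim l - s * z k l) atTop
                  (𝓝 (s * Ylim l - s * Ylim l)) :=
                Tendsto.sub tendsto_const_nhds ((hz_tend l).const_mul s)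
              simpa using h6
            simpa using h5.abs
          simpa using this
        have tall : Tendsto (fun k => T0i + (s / Mk k) * (β - T0i) + s * z k i
            + ∑ l, |s * Ylim l - s * z k l|) atTop (𝓝 (T0i + 0 + -s + 0)) :=
          ((Tendsto.add tendsto_const_nhds t2).add t3).add t4
        simpa [sub_eq_add_neg] using tall
      exact ge_of_tendsto htend hev
    -- deduce the one-coordinate ray bound
    have hray : ∀ c : ℝ, 0 ≤ c → T (fun l => if l = j then c else 0) i ≤ T (fun _ => 0) i := by
      intro c hc
      set ε := 1 + Ylim j with hε
      have hεpos : 0 < ε := by simp only [hε]; linarith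
      set s := c / ε with hsdef
      have hs : 0 ≤ s := div_nonneg hc hεpos.le
      have hsε : s * ε = c := div_mul_cancel₀ c (ne_of_gt hεpos)
      have hvle : ∀ l, (if l = j then c else 0) + (-s) ≤ s * Ylim l := by
        intro l
        by_cases hl : l = j
        · subst hl
          rw [if_pos rfl]
          have : s * Ylim l = c - s := by
            have : Ylim l = ε - 1 := by simp only [hε]; ring
            rw [this, mul_sub, hsε, mul_one]
          linarith [this.ge]
        · rw [if_neg hl]
          have := mul_le_mul_of_nonneg_left (hYlb l) hs
          rw [mul_neg_one] at this
          linarith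
      have h1 : T (fun l => (if l = j then c else 0) + (-s)) i ≤ T (fun l => s * Ylim l) i :=
        hmono hvle i
      rw [hhom (fun l => if l = j then c else 0) (-s)] at h1
      have h1' : T (fun l => if l = j then c else 0) i + (-s) ≤ T (fun l => s * Ylim l) i := h1
      have h2 := hrayA s hs
      linarith
    exact (not_mem_supp hmono hhom hn i j (hconv i) hray) hjsupp
  exact ⟨Θ, Δ, hΘne, hΔne, hdis, hsupp, hdom⟩

end H4

theorem stmt15 (n : ℕ) (hn : 1 ≤ n)
    (T : (Fin n → ℝ) → (Fin n → ℝ))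
    (hmono : Monotone T) (hhom : AddHomog n T)
    (hconv : ∀ i, ConvexOn ℝ Set.univ (fun x => T x i)) :
    (∃ α β : ℝ, α ≤ β ∧
        ¬ ∃ M : ℝ, ∀ x ∈ addSliceSpace n T α β, hilbertSeminorm n x ≤ M) ↔
    (∃ Θ Δ : Set (Fin n), Θ.Nonempty ∧ Δ.Nonempty ∧ Disjoint Θ Δ ∧
        (∀ i ∈ Θ, Supp n (fun x => T x i) ⊆ Θ) ∧ MaxDominion n T Δ) := by
  constructor
  · rintro ⟨α, β, hαβ, hunb⟩
    exact forward_dir (by omega) T hmono hhom hconv α β hunb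
  · rintro ⟨Θ, Δ, h1, h2, h3, h4, h5⟩
    exact backward_dir (by omega) T hmono hhom Θ Δ h1 h2 h3 h4 h5
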